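/- Let p be an odd prime and let G be the group presented as F_6 modulo the normal closure of {r_1, …, r_6} ∪ W_p (i.e., G = ⟨x_1, …, x_6 | r_1, …, r_6, W_p⟩). Then for every integer q ≥ p+1, the quotient G/γ_q G is not isomorphic to F^q(6,p). -/

import Mathlib

/-- `W_n`, the set of `n`-th powers in a group `G`. -/
def powSet (G : Type*) [Group G] (n : ℕ) : Set G := {x | ∃ w : G, x = w ^ n}

/-- `W̄_n`, the normal subgroup of the free group `F_m` generated by the set `W_n`
of `n`-th powers. -/
def Wbar (m n : ℕ) : Subgroup (FreeGroup (Fin m)) :=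
  Subgroup.normalClosure (powSet (FreeGroup (Fin m)) n)

instance (m n : ℕ) : (Wbar m n).Normal := Subgroup.normalClosure_normal

/-- `W̄_n · γ_q F_m`: since both factors are normal subgroups of `F_m`, this product
subgroup equals the join.  (Recall `lowerCentralSeries G 0 = G = γ₁ G`, so
`γ_q G = lowerCentralSeries G (q-1)`.) -/
def WbarGamma (m n q : ℕ) : Subgroup (FreeGroup (Fin m)) :=
  Wbar m n ⊔ (⊤ : Subgroup (FreeGroup (Fin m))).lowerCentralSeries (q - 1)

instance (m n q : ℕ) : (WbarGamma m n q).Normal := Subgroup.sup_normal _ _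

/-- `F^q(m,n) = F_m / (W̄_n · γ_q F_m)`. -/
def BurnsideQuot (m n q : ℕ) : Type := FreeGroup (Fin m) ⧸ WbarGamma m n q

noncomputable instance (m n q : ℕ) : Group (BurnsideQuot m n q) :=
  QuotientGroup.Quotient.group _

/-- The generators `x_1, …, x_6` of the free group `F_6` (`xB i` is `x_{i+1}`). -/
def xB (i : Fin 6) : FreeGroup (Fin 6) := FreeGroup.of i

/-- The relators `r_1, …, r_6 ∈ F_6` of the associated core group of the 2-parallel of
the Borromean rings (`rBor i` is `r_{i+1}`). -/
def rBor (i : Fin 6) : FreeGroup (Fin 6) :=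
  if i.val ≤ 1 then
    (xB 0 * (xB 1)⁻¹ * xB 4 * (xB 5)⁻¹ * xB 1 * (xB 0)⁻¹ * xB i *
      (xB 0)⁻¹ * xB 1 * (xB 5)⁻¹ * xB 4 * (xB 1)⁻¹ * xB 0)⁻¹ *
    (xB 0 * (xB 1)⁻¹ * xB 2 * (xB 3)⁻¹ * xB 4 * (xB 5)⁻¹ * xB 3 * (xB 2)⁻¹ * xB 1 * (xB 0)⁻¹ *
      xB i *
      (xB 0)⁻¹ * xB 1 * (xB 2)⁻¹ * xB 3 * (xB 5)⁻¹ * xB 4 * (xB 3)⁻¹ * xB 2 * (xB 1)⁻¹ * xB 0)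
  else if i.val ≤ 3 then
    (xB 5 * (xB 4)⁻¹ * xB i * (xB 4)⁻¹ * xB 5)⁻¹ *
    (xB 0 * (xB 1)⁻¹ * xB 5 * (xB 4)⁻¹ * xB 1 * (xB 0)⁻¹ * xB i *
      (xB 0)⁻¹ * xB 1 * (xB 4)⁻¹ * xB 5 * (xB 1)⁻¹ * xB 0)
  else
    (xB 0 * (xB 1)⁻¹ * xB i * (xB 1)⁻¹ * xB 0)⁻¹ *
    (xB 3 * (xB 2)⁻¹ * xB 0 * (xB 1)⁻¹ * xB 2 * (xB 3)⁻¹ * xB i *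
      (xB 3)⁻¹ * xB 2 * (xB 1)⁻¹ * xB 0 * (xB 2)⁻¹ * xB 3)

/-- `G = ⟨x_1, …, x_6 | r_1, …, r_6, W_p⟩`, the quotient of `F_6` by the normal closure
of `{r_1, …, r_6} ∪ W_p`. -/
def GBor (p : ℕ) : Type :=
  FreeGroup (Fin 6) ⧸
    Subgroup.normalClosure (Set.range rBor ∪ powSet (FreeGroup (Fin 6)) p)

noncomputable instance (p : ℕ) : Group (GBor p) := QuotientGroup.Quotient.group _


section Aux

@[ext] structure TG (R : Type) [CommRing R] where
  a : Fin 6 → R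
  b : Fin 6 → Fin 6 → R
  c : R

namespace TG

variable {R : Type} [CommRing R]

instance [DecidableEq R] : DecidableEq (TG R) := fun x y =>
  decidable_of_iff (x.a = y.a ∧ x.b = y.b ∧ x.c = y.c)
    (by cases x; cases y; simp [TG.ext_iff])

instance : One (TG R) := ⟨⟨0, 0, 0⟩⟩
instance : Mul (TG R) :=
  ⟨fun x y => ⟨x.a + y.a, x.b + y.b + fun i j => x.a i * y.a j,
    x.c + y.c + (x.a 4 * y.b 2 0 - x.a 0 * y.b 4 2) + (x.b 4 2 * y.a 0 - x.b 0 4 * y.a 2)⟩⟩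
instance : Inv (TG R) :=
  ⟨fun x => ⟨-x.a, -x.b + fun i j => x.a i * x.a j,
    -x.c + (x.a 4 * x.b 2 0 - x.a 0 * x.b 4 2) + (x.b 4 2 * x.a 0 - x.b 0 4 * x.a 2)⟩⟩

@[simp] lemma one_a : (1 : TG R).a = 0 := rfl
@[simp] lemma one_b : (1 : TG R).b = 0 := rfl
@[simp] lemma one_c : (1 : TG R).c = 0 := rfl
@[simp] lemma mul_a (x y : TG R) : (x * y).a = x.a + y.a := rfl
@[simp] lemma mul_b (x y : TG R) : (x * y).b = x.b + y.b + fun i j => x.a i * y.a j := rfl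
@[simp] lemma mul_c (x y : TG R) : (x * y).c =
    x.c + y.c + (x.a 4 * y.b 2 0 - x.a 0 * y.b 4 2) + (x.b 4 2 * y.a 0 - x.b 0 4 * y.a 2) := rfl
@[simp] lemma inv_a (x : TG R) : (x⁻¹).a = -x.a := rfl
@[simp] lemma inv_b (x : TG R) : (x⁻¹).b = -x.b + fun i j => x.a i * x.a j := rfl
@[simp] lemma inv_c (x : TG R) : (x⁻¹).c =
    -x.c + (x.a 4 * x.b 2 0 - x.a 0 * x.b 4 2) + (x.b 4 2 * x.a 0 - x.b 0 4 * x.a 2) := rfl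

instance : Group (TG R) where
  mul_assoc x y z := by ext i j <;> simp <;> ring
  one_mul x := by ext i j <;> simp
  mul_one x := by ext i j <;> simp
  inv_mul_cancel x := by ext i j <;> simp <;> ring

/-- Explicit formula for powers. -/
lemma pow_eq (x : TG R) (n : ℕ) :
    x ^ n = ⟨(n : R) • x.a, (n : R) • x.b + (n.choose 2 : R) • fun i j => x.a i * x.a j,
      (n : R) * x.c + (n.choose 2 : R) *
        ((x.a 4 * x.b 2 0 - x.a 0 * x.b 4 2) + (x.b 4 2 * x.a 0 - x.b 0 4 * x.a 2))⟩ := by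
  induction n with
  | zero => ext i j <;> simp
  | succ n ih =>
      have hch : ((n + 1).choose 2 : R) = (n.choose 2 : R) + (n : R) := by
        rw [Nat.choose_succ_succ, Nat.choose_one_right]
        push_cast; ring
      rw [pow_succ, ih]
      ext i j <;> simp [hch] <;> push_cast <;> ring

/-- In `TG (ZMod p)` for odd prime `p`, every `p`-th power is trivial. -/
lemma pow_p_eq_one (p : ℕ) (hp : p.Prime) (hodd : Odd p) (x : TG (ZMod p)) :
    x ^ p = 1 := by
  have h2 : (2 : ℕ) < p := by
    rcases hp.two_le.lt_or_eq with h | h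
    · exact h
    · exfalso; rw [← h] at hodd; simpa using (Nat.odd_iff.mp hodd)
  have hc : ((p.choose 2 : ℕ) : ZMod p) = 0 := by
    rw [ZMod.natCast_eq_zero_iff]
    exact Nat.Prime.dvd_choose_self hp (by norm_num) h2
  rw [pow_eq]
  ext i j <;> simp [hc, ZMod.natCast_self]


/-- Elements with trivial degree-1 part form a subgroup. -/
def K2 : Subgroup (TG R) where
  carrier := {x | x.a = 0}
  one_mem' := rfl
  mul_mem' := by intro x y hx hy
                 simp only [Set.mem_setOf_eq] at *
                 simp [hx, hy]
  inv_mem' := by intro x hx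
                 simp only [Set.mem_setOf_eq] at *
                 simp [hx]

/-- Elements with trivial degree-1 and degree-2 parts form a subgroup. -/
def K3 : Subgroup (TG R) where
  carrier := {x | x.a = 0 ∧ x.b = 0}
  one_mem' := ⟨rfl, rfl⟩
  mul_mem' := by intro x y hx hy
                 simp only [Set.mem_setOf_eq] at *
                 constructor
                 · simp [hx.1, hy.1]
                 · funext i j
                   simp [show x.a = 0 from hx.1, show x.b = 0 from hx.2,
                         show y.b = 0 from hy.2]
  inv_mem' := by intro x hx
                 simp only [Set.mem_setOf_eq] at *
                 constructor
                 · simp [hx.1]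
                 · funext i j
                   simp [show x.a = 0 from hx.1, show x.b = 0 from hx.2]

lemma lcs_one_le : (⊤ : Subgroup (TG R)).lowerCentralSeries 1 ≤ (K2 : Subgroup (TG R)) := by
  rw [Subgroup.lowerCentralSeries_succ, Subgroup.commutator_def, Subgroup.closure_le]
  rintro x ⟨g, -, h, -, rfl⟩
  show (g * h * g⁻¹ * h⁻¹).a = 0
  funext i; simp

lemma lcs_two_le : (⊤ : Subgroup (TG R)).lowerCentralSeries 2 ≤ (K3 : Subgroup (TG R)) := by
  rw [Subgroup.lowerCentralSeries_succ, Subgroup.commutator_def, Subgroup.closure_le]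
  rintro x ⟨g, hg, h, -, rfl⟩
  have hga : g.a = 0 := lcs_one_le hg
  constructor
  · show (g * h * g⁻¹ * h⁻¹).a = 0
    funext i; simp [hga]
  · show (g * h * g⁻¹ * h⁻¹).b = 0
    funext i j; simp [hga]

/-- The group `TG R` is nilpotent of class at most 3. -/
lemma lcs_three_eq_bot : (⊤ : Subgroup (TG R)).lowerCentralSeries 3 = ⊥ := by
  apply Subgroup.lowerCentralSeries_succ_eq_bot
  intro x hx
  obtain ⟨hxa, hxb⟩ := lcs_two_le hx
  rw [Subgroup.mem_center_iff]
  intro g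
  ext i j <;> simp [hxa, hxb] <;> ring

/-- The ring-cast homomorphism `TG ℤ →* TG R`. -/
def castHom (R : Type) [CommRing R] : TG ℤ →* TG R where
  toFun x := ⟨fun i => (x.a i : R), fun i j => (x.b i j : R), (x.c : R)⟩
  map_one' := by ext i j <;> simp
  map_mul' x y := by ext i j <;> simp <;> push_cast <;> ring

@[simp] lemma castHom_a (R : Type) [CommRing R] (x : TG ℤ) (i : Fin 6) :
    ((castHom R) x).a i = (x.a i : R) := rfl
@[simp] lemma castHom_b (R : Type) [CommRing R] (x : TG ℤ) (i j : Fin 6) :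
    ((castHom R) x).b i j = (x.b i j : R) := rfl
@[simp] lemma castHom_c (R : Type) [CommRing R] (x : TG ℤ) :
    ((castHom R) x).c = (x.c : R) := rfl

/-- The images of the free generators: `x_i ↦ 1 + t_i`. -/
def gen (i : Fin 6) : TG ℤ := ⟨fun j => if j = i then 1 else 0, 0, 0⟩

end TG


lemma key : FreeGroup.lift TG.gen (rBor 0) = (⟨0, 0, 2⟩ : TG ℤ) := by
  have h : rBor 0 =
    (xB 0 * (xB 1)⁻¹ * xB 4 * (xB 5)⁻¹ * xB 1 * (xB 0)⁻¹ * xB 0 *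
      (xB 0)⁻¹ * xB 1 * (xB 5)⁻¹ * xB 4 * (xB 1)⁻¹ * xB 0)⁻¹ *
    (xB 0 * (xB 1)⁻¹ * xB 2 * (xB 3)⁻¹ * xB 4 * (xB 5)⁻¹ * xB 3 * (xB 2)⁻¹ * xB 1 * (xB 0)⁻¹ *
      xB 0 *
      (xB 0)⁻¹ * xB 1 * (xB 2)⁻¹ * xB 3 * (xB 5)⁻¹ * xB 4 * (xB 3)⁻¹ * xB 2 * (xB 1)⁻¹ * xB 0) := rfl
  rw [h]
  simp only [xB, map_mul, map_inv, FreeGroup.lift_apply_of]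
  decide


lemma TG_finite (p : ℕ) [NeZero p] : Finite (TG (ZMod p)) :=
  Finite.of_equiv ((Fin 6 → ZMod p) × (Fin 6 → Fin 6 → ZMod p) × ZMod p)
    ⟨fun t => ⟨t.1, t.2.1, t.2.2⟩, fun x => (x.a, x.b, x.c),
     fun t => rfl, fun x => rfl⟩

end Aux

/-- For every odd prime `p` and every integer `q ≥ p+1`, the quotient
`G/γ_q G` is not isomorphic to `F^q(6,p)`, where `G = ⟨x_1, …, x_6 | r_1, …, r_6, W_p⟩`. -/
theorem GBor_quot_not_iso (p : ℕ) (hp : p.Prime) (hodd : Odd p)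
    (q : ℕ) (hq : p + 1 ≤ q) :
    ¬ Nonempty ((GBor p ⧸ (⊤ : Subgroup (GBor p)).lowerCentralSeries (q - 1)) ≃*
        BurnsideQuot 6 p q) := by
  rintro ⟨iso⟩
  haveI : NeZero p := ⟨hp.pos.ne'⟩
  haveI : Finite (TG (ZMod p)) := TG_finite p
  have hp3 : 3 ≤ p := by
    rcases hp.two_le.lt_or_eq with h | h
    · exact h
    · exfalso; rw [← h] at hodd; simpa using Nat.odd_iff.mp hodd
  let H := TG (ZMod p)
  let F := FreeGroup (Fin 6)
  let φ : F →* H := (TG.castHom (ZMod p)).comp (FreeGroup.lift TG.gen)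
  -- φ kills WbarGamma
  have hHlcs : (⊤ : Subgroup H).lowerCentralSeries (q - 1) = ⊥ := by
    have h3 : (3 : ℕ) ≤ q - 1 := by omega
    have h4 : (⊤ : Subgroup (TG (ZMod p))).lowerCentralSeries (q - 1) ≤ (⊤ : Subgroup (TG (ZMod p))).lowerCentralSeries 3 :=
      Subgroup.lowerCentralSeries_antitone _ h3
    rw [TG.lcs_three_eq_bot] at h4
    exact le_bot_iff.mp h4
  have hφker : WbarGamma 6 p q ≤ φ.ker := by
    apply sup_le
    · apply Subgroup.normalClosure_le_normal
      rintro x ⟨w, rfl⟩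
      show φ (w ^ p) = 1
      rw [map_pow]
      exact TG.pow_p_eq_one p hp hodd _
    · intro x hx
      have h1 : φ x ∈ (⊤ : Subgroup H).lowerCentralSeries (q - 1) :=
        Subgroup.lowerCentralSeries.map φ (q - 1) ⟨x, hx, rfl⟩
      rw [hHlcs] at h1
      simpa [MonoidHom.mem_ker] using h1
  -- φ does not kill rBor 0
  have hφr : φ (rBor 0) ≠ 1 := by
    have hval : φ (rBor 0) = (⟨0, 0, ((2 : ℤ) : ZMod p)⟩ : TG (ZMod p)) := by
      show TG.castHom (ZMod p) (FreeGroup.lift TG.gen (rBor 0)) = _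
      rw [key]
      ext i j <;> simp
    rw [hval]
    intro hcontr
    have h2 : ((2 : ℕ) : ZMod p) = 0 := by
      have := congrArg TG.c hcontr
      simpa using this
    rw [ZMod.natCast_eq_zero_iff] at h2
    have := Nat.le_of_dvd (by norm_num) h2
    omega
  -- the two projections from the free group
  set N : Subgroup F :=
    Subgroup.normalClosure (Set.range rBor ∪ powSet F p) with hN
  let ρ : F →* GBor p := QuotientGroup.mk' N
  let πA : F →* (GBor p ⧸ (⊤ : Subgroup (GBor p)).lowerCentralSeries (q - 1)) :=
    (QuotientGroup.mk' ((⊤ : Subgroup (GBor p)).lowerCentralSeries (q - 1))).comp ρ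
  let πB : F →* BurnsideQuot 6 p q := QuotientGroup.mk' (WbarGamma 6 p q)
  have hπAsurj : Function.Surjective πA :=
    (QuotientGroup.mk'_surjective _).comp (QuotientGroup.mk'_surjective N)
  have hπBsurj : Function.Surjective πB := QuotientGroup.mk'_surjective _
  have hkerA : WbarGamma 6 p q ≤ πA.ker := by
    apply sup_le
    · apply Subgroup.normalClosure_le_normal
      intro x hx
      have hxN : x ∈ N := Subgroup.subset_normalClosure (Set.mem_union_right _ hx)
      have hρx : ρ x = 1 := (QuotientGroup.eq_one_iff x).mpr hxN
      show πA x = 1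
      show (QuotientGroup.mk' ((⊤ : Subgroup (GBor p)).lowerCentralSeries (q - 1))) (ρ x) = 1
      rw [hρx, map_one]
    · intro x hx
      have h1 : ρ x ∈ (⊤ : Subgroup (GBor p)).lowerCentralSeries (q - 1) :=
        Subgroup.lowerCentralSeries.map ρ (q - 1) ⟨x, hx, rfl⟩
      show (QuotientGroup.mk' ((⊤ : Subgroup (GBor p)).lowerCentralSeries (q - 1))) (ρ x) = 1
      exact (QuotientGroup.eq_one_iff _).mpr h1
  have hrA : πA (rBor 0) = 1 := by
    have hxN : rBor 0 ∈ N :=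
      Subgroup.subset_normalClosure (Set.mem_union_left _ ⟨0, rfl⟩)
    have hρx : ρ (rBor 0) = 1 := (QuotientGroup.eq_one_iff _).mpr hxN
    show (QuotientGroup.mk' ((⊤ : Subgroup (GBor p)).lowerCentralSeries (q - 1))) (ρ (rBor 0)) = 1
    rw [hρx, map_one]
  -- counting homomorphisms into H
  haveI : Finite (F →* H) := Finite.of_equiv _ FreeGroup.lift
  let eA : ((GBor p ⧸ (⊤ : Subgroup (GBor p)).lowerCentralSeries (q - 1)) →* H) → (F →* H) :=
    fun g => g.comp πA
  let eB : (BurnsideQuot 6 p q →* H) → (F →* H) := fun g => g.comp πB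
  have injA : Function.Injective eA := fun g₁ g₂ h =>
    MonoidHom.ext fun a => by
      obtain ⟨x, rfl⟩ := hπAsurj a
      exact DFunLike.congr_fun h x
  have injB : Function.Injective eB := fun g₁ g₂ h =>
    MonoidHom.ext fun a => by
      obtain ⟨x, rfl⟩ := hπBsurj a
      exact DFunLike.congr_fun h x
  have hsub : Set.range eA ⊆ Set.range eB := by
    rintro f ⟨g, rfl⟩
    have hker' : ∀ x ∈ WbarGamma 6 p q, (g.comp πA) x = 1 := by
      intro x hx
      have : πA x = 1 := hkerA hx
      simp [MonoidHom.comp_apply, this]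
    refine ⟨QuotientGroup.lift (WbarGamma 6 p q) (g.comp πA) hker',
      MonoidHom.ext fun x => ?_⟩
    show QuotientGroup.lift (WbarGamma 6 p q) (g.comp πA) hker' (QuotientGroup.mk x)
      = (g.comp πA) x
    exact QuotientGroup.lift_mk' _ _ x
  have hφB : φ ∈ Set.range eB := by
    have hker' : ∀ x ∈ WbarGamma 6 p q, φ x = 1 := fun x hx => hφker hx
    refine ⟨QuotientGroup.lift (WbarGamma 6 p q) φ hker', MonoidHom.ext fun x => ?_⟩
    show QuotientGroup.lift (WbarGamma 6 p q) φ hker' (QuotientGroup.mk x) = φ x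
    exact QuotientGroup.lift_mk' _ _ x
  have hφA : φ ∉ Set.range eA := by
    rintro ⟨g, hg⟩
    apply hφr
    have := DFunLike.congr_fun hg (rBor 0)
    rw [← this]
    show g (πA (rBor 0)) = 1
    rw [hrA, map_one]
  have hss : Set.range eA ⊂ Set.range eB := by
    rw [Set.ssubset_def]
    exact ⟨hsub, fun hba => hφA (hba hφB)⟩
  have hlt : (Set.range eA).ncard < (Set.range eB).ncard :=
    Set.ncard_lt_ncard hss (Set.toFinite _)
  have cA : Nat.card ((GBor p ⧸ (⊤ : Subgroup (GBor p)).lowerCentralSeries (q - 1)) →* H)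
      = (Set.range eA).ncard := by
    rw [← Nat.card_coe_set_eq]
    exact Nat.card_congr (Equiv.ofInjective _ injA)
  have cB : Nat.card (BurnsideQuot 6 p q →* H) = (Set.range eB).ncard := by
    rw [← Nat.card_coe_set_eq]
    exact Nat.card_congr (Equiv.ofInjective _ injB)
  have cAB : Nat.card ((GBor p ⧸ (⊤ : Subgroup (GBor p)).lowerCentralSeries (q - 1)) →* H)
      = Nat.card (BurnsideQuot 6 p q →* H) := by
    refine Nat.card_congr ⟨fun g => g.comp iso.symm.toMonoidHom,
      fun g => g.comp iso.toMonoidHom, fun g => ?_, fun g => ?_⟩ <;>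
      exact MonoidHom.ext fun a => by simp
  omega
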